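/- arXiv:1702.06260 — 3 statements merged into one kernel-verified Lean document; each statement's English description precedes it below -/
import Mathlib

section
/- Let 𝒟 be a nonempty set and p, q : 𝒟 → ℝ. Suppose that for every t in an open interval I ⊆ ℝ the value f(t) := sup_{x ∈ 𝒟} ( p(x) + t q(x) ) is finite and the supremum is attained. Then f is convex on I, and for Lebesgue-almost every t ∈ I: f is differentiable at t and f′(t) = q(x⋆) for every x⋆ ∈ argmax_{x ∈ 𝒟} ( p(x) + t q(x) ); in particular, for all such t, any two maximizers x⋆, x̃⋆ satisfy q(x⋆) = q(x̃⋆) and p(x⋆) = p(x̃⋆). -/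
noncomputable section

/-- **Lemma (invariance from differentiation of the value function).**
If `f t := sup_{x ∈ 𝒟} (p x + t q x)` is finite and attained for every `t` in an open
interval `I`, then `f` is convex on `I` and, for Lebesgue-a.e. `t ∈ I`, `f` is differentiable
at `t` with `f'(t) = q x⋆` for every maximizer `x⋆`; in particular all maximizers at such `t`
share the same values of `q` and of `p`. -/
theorem statement10
    {D : Type*} [Nonempty D] (p q : D → ℝ) (I : Set ℝ)
    (hIopen : IsOpen I) (hIconv : Convex ℝ I)
    (hattain : ∀ t ∈ I, ∃ x : D, ∀ y : D, p y + t * q y ≤ p x + t * q x) :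
    ConvexOn ℝ I (fun t => ⨆ x : D, (p x + t * q x)) ∧
      ∀ᵐ t ∂(MeasureTheory.volume.restrict I),
        (∀ x : D, (∀ y : D, p y + t * q y ≤ p x + t * q x) →
            HasDerivAt (fun s => ⨆ x : D, (p x + s * q x)) (q x) t) ∧
        (∀ x x' : D, (∀ y : D, p y + t * q y ≤ p x + t * q x) →
            (∀ y : D, p y + t * q y ≤ p x' + t * q x') → q x = q x' ∧ p x = p x') := by
  set f : ℝ → ℝ := fun t => ⨆ x : D, (p x + t * q x) with hf
  have hbdd : ∀ t ∈ I, BddAbove (Set.range fun x : D => p x + t * q x) := by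
    intro t ht
    obtain ⟨x, hx⟩ := hattain t ht
    exact ⟨p x + t * q x, by rintro z ⟨y, rfl⟩; exact hx y⟩
  have hle : ∀ t ∈ I, ∀ y : D, p y + t * q y ≤ f t := fun t ht y =>
    le_ciSup (hbdd t ht) y
  have hval : ∀ t ∈ I, ∀ x : D, (∀ y : D, p y + t * q y ≤ p x + t * q x) →
      f t = p x + t * q x := by
    intro t ht x hx
    exact le_antisymm (ciSup_le hx) (hle t ht x)
  -- Convexity
  have hconv : ConvexOn ℝ I f := by
    refine ⟨hIconv, ?_⟩
    intro t ht s hs a b ha hb hab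
    have hmem : a • t + b • s ∈ I := hIconv ht hs ha hb hab
    obtain ⟨x, hx⟩ := hattain _ hmem
    refine ciSup_le fun y => (hx y).trans ?_
    have h1 := hle t ht x
    have h2 := hle s hs x
    simp only [smul_eq_mul]
    have e : a * p x + b * p x = p x := by rw [← add_mul, hab, one_mul]
    nlinarith [mul_le_mul_of_nonneg_left h1 ha, mul_le_mul_of_nonneg_left h2 hb, e]
  refine ⟨hconv, ?_⟩
  -- The set of non-differentiability points has measure zero
  set B : Set ℝ := {t | t ∈ I ∧ ¬ DifferentiableAt ℝ f t} with hB
  have hB0 : MeasureTheory.volume B = 0 := by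
    apply MeasureTheory.measure_null_of_locally_null
    rintro t ⟨htI, -⟩
    obtain ⟨K, u, hu, hlip⟩ := hconv.locallyLipschitzOn hIopen htI
    rw [nhdsWithin_eq_nhds.2 (hIopen.mem_nhds htI)] at hu
    obtain ⟨ε, hε, hball⟩ := Metric.mem_nhds_iff.1 hu
    have hlip' : LipschitzOnWith K f (Metric.ball t ε) := hlip.mono hball
    have hae := hlip'.ae_differentiableWithinAt_of_mem_real
    refine ⟨B ∩ Metric.ball t ε, inter_mem_nhdsWithin _ (Metric.ball_mem_nhds t hε), ?_⟩
    rw [MeasureTheory.ae_iff] at hae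
    apply MeasureTheory.measure_mono_null _ hae
    rintro s ⟨⟨-, hsdiff⟩, hsball⟩
    intro h
    exact hsdiff ((h hsball).differentiableAt (Metric.isOpen_ball.mem_nhds hsball))
  have h1 : ∀ᵐ t ∂(MeasureTheory.volume.restrict I), t ∈ I :=
    MeasureTheory.ae_restrict_mem hIopen.measurableSet
  have h2 : ∀ᵐ t ∂(MeasureTheory.volume.restrict I), t ∉ B :=
    MeasureTheory.ae_restrict_of_ae (MeasureTheory.measure_eq_zero_iff_ae_notMem.1 hB0)
  filter_upwards [h1, h2] with t htI htB
  have hdiff : DifferentiableAt ℝ f t := by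
    by_contra h
    exact htB ⟨htI, h⟩
  have hderiv : ∀ x : D, (∀ y : D, p y + t * q y ≤ p x + t * q x) →
      HasDerivAt f (q x) t := by
    intro x hx
    have hd : HasDerivAt f (deriv f t) t := hdiff.hasDerivAt
    have haff : HasDerivAt (fun s : ℝ => p x + s * q x) (q x) t :=
      (hasDerivAt_mul_const (q x)).const_add (p x)
    have hg : HasDerivAt (fun s => f s - (p x + s * q x)) (deriv f t - q x) t :=
      hd.sub haff
    have hmin : IsLocalMin (fun s => f s - (p x + s * q x)) t := by
      have hI : ∀ᶠ s in nhds t, s ∈ I := hIopen.mem_nhds htI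
      filter_upwards [hI] with s hs
      have := hle s hs x
      have heq := hval t htI x hx
      show f t - (p x + t * q x) ≤ f s - (p x + s * q x)
      linarith
    have := hmin.hasDerivAt_eq_zero hg
    have : deriv f t = q x := by linarith
    exact this ▸ hd
  refine ⟨hderiv, ?_⟩
  intro x x' hx hx'
  have hq : q x = q x' := (hderiv x hx).unique (hderiv x' hx')
  have : p x + t * q x = p x' + t * q x' := (hval t htI x hx) ▸ (hval t htI x' hx')
  constructor
  · exact hq
  · rw [hq] at this; linarith

end
end

section
/- Let l ≥ 2 and for each i = 1,…,l let P_{X_i} be a Borel probability measure on ℝ and (P^{(n)}_{X_i})_{n ≥ 1} Borel probability measures on ℝ converging weakly to P_{X_i} as n → ∞. If P_X is a Borel probability measure on ℝ^l whose i-th coordinate marginal is P_{X_i} for each i, then there exist a strictly increasing sequence of indices (n_k)_{k ≥ 1} and Borel probability measures P^{(n_k)}_X on ℝ^l, each having i-th coordinate marginal P^{(n_k)}_{X_i} for every i, such that P^{(n_k)}_X converges weakly to P_X as k → ∞. -/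
open MeasureTheory

noncomputable section
set_option linter.unusedSectionVars false

open ProbabilityTheory Set Filter
open scoped Topology ENNReal

namespace S15

/-- The uniform measure on `(0,1)`. -/
def unif : Measure ℝ := volume.restrict (Ioo 0 1)

instance : IsProbabilityMeasure unif := by
  constructor
  simp [unif, Measure.restrict_apply, Real.volume_Ioo]

/-- The quantile function (generalized inverse cdf), with junk value `0` outside `(0,1)`. -/
def quantile (μ : Measure ℝ) (u : ℝ) : ℝ :=
  if 0 < u ∧ u < 1 then sInf {x | u ≤ cdf μ x} else 0

variable {μ : Measure ℝ} [IsProbabilityMeasure μ] {u : ℝ}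

lemma quantile_eq (h0 : 0 < u) (h1 : u < 1) :
    quantile μ u = sInf {x | u ≤ cdf μ x} := if_pos ⟨h0, h1⟩

lemma qSet_nonempty (h1 : u < 1) : {x | u ≤ cdf μ x}.Nonempty := by
  have := (tendsto_cdf_atTop μ).eventually (eventually_ge_nhds h1)
  rcases this.exists with ⟨x, hx⟩
  exact ⟨x, hx⟩

lemma qSet_bddBelow (h0 : 0 < u) : BddBelow {x | u ≤ cdf μ x} := by
  have := (tendsto_cdf_atBot μ).eventually (eventually_lt_nhds h0)
  rcases this.exists with ⟨b, hb⟩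
  refine ⟨b, fun x hx => ?_⟩
  by_contra hbx
  push_neg at hbx
  exact absurd (le_trans hx (monotone_cdf μ hbx.le)) (not_le.mpr hb)

lemma le_cdf_quantile (h0 : 0 < u) (h1 : u < 1) : u ≤ cdf μ (quantile μ u) := by
  rw [quantile_eq h0 h1]
  set s : Set ℝ := {x | u ≤ cdf μ x} with hs
  have hne : s.Nonempty := qSet_nonempty h1
  have hbdd : BddBelow s := qSet_bddBelow h0
  have hmem : sInf s ∈ closure s := csInf_mem_closure hne hbdd
  have hne' : (𝓝[s] (sInf s)).NeBot := mem_closure_iff_nhdsWithin_neBot.mp hmem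
  have hsub : s ⊆ Ici (sInf s) := fun x hx => csInf_le hbdd hx
  have hc : ContinuousWithinAt (cdf μ) s (sInf s) :=
    ((cdf μ).right_continuous (sInf s)).mono hsub
  exact ge_of_tendsto hc (eventually_nhdsWithin_of_forall (fun x hx => hx))

lemma quantile_le_iff (h0 : 0 < u) (h1 : u < 1) {x : ℝ} :
    quantile μ u ≤ x ↔ u ≤ cdf μ x := by
  constructor
  · intro h
    exact le_trans (le_cdf_quantile h0 h1) (monotone_cdf μ h)
  · intro h
    rw [quantile_eq h0 h1]
    exact csInf_le (qSet_bddBelow h0) h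

lemma lt_quantile_iff (h0 : 0 < u) (h1 : u < 1) {x : ℝ} :
    x < quantile μ u ↔ cdf μ x < u := by
  rw [← not_le, ← not_le, not_iff_not]
  exact quantile_le_iff h0 h1

lemma measurable_quantile (μ : Measure ℝ) [IsProbabilityMeasure μ] :
    Measurable (quantile μ) := by
  apply measurable_of_Iic
  intro x
  have : quantile μ ⁻¹' Iic x =
      (Ioo (0:ℝ) 1 ∩ Iic (cdf μ x)) ∪ ((Ioo (0:ℝ) 1)ᶜ ∩ {u | (0:ℝ) ≤ x}) := by
    ext u
    by_cases hu : 0 < u ∧ u < 1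
    · simp only [mem_preimage, mem_Iic, mem_union, mem_inter_iff, mem_Ioo, mem_compl_iff,
        mem_setOf_eq]
      rw [quantile_le_iff hu.1 hu.2]
      constructor
      · intro h; exact Or.inl ⟨hu, h⟩
      · rintro (⟨_, h⟩ | ⟨h, _⟩)
        · exact h
        · exact absurd hu h
    · simp only [mem_preimage, mem_Iic, mem_union, mem_inter_iff, mem_Ioo, mem_compl_iff,
        mem_setOf_eq]
      rw [quantile, if_neg hu]
      constructor
      · intro h; exact Or.inr ⟨hu, h⟩
      · rintro (⟨h, _⟩ | ⟨_, h⟩)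
        · exact absurd h hu
        · exact h
  rw [this]
  by_cases hx : (0:ℝ) ≤ x
  · have : {u : ℝ | (0:ℝ) ≤ x} = univ := eq_univ_of_forall (fun _ => hx)
    rw [this]
    exact (measurableSet_Ioo.inter measurableSet_Iic).union
      (measurableSet_Ioo.compl.inter MeasurableSet.univ)
  · have : {u : ℝ | (0:ℝ) ≤ x} = ∅ := eq_empty_of_forall_notMem (fun _ => hx)
    rw [this]
    exact (measurableSet_Ioo.inter measurableSet_Iic).union
      (measurableSet_Ioo.compl.inter MeasurableSet.empty)

lemma unif_Iic (t : ℝ) : unif (Iic t) = ENNReal.ofReal (min t 1) := by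
  rw [unif, Measure.restrict_apply measurableSet_Iic]
  rcases le_or_gt 1 t with h | h
  · have : Iic t ∩ Ioo 0 1 = Ioo 0 1 := inter_eq_self_of_subset_right
      (fun y hy => le_trans hy.2.le h)
    rw [this, Real.volume_Ioo, min_eq_right h]
    norm_num
  · have : Iic t ∩ Ioo (0:ℝ) 1 = Ioc 0 t ∩ Ioo 0 1 := by
      ext y
      simp only [mem_inter_iff, mem_Iic, mem_Ioo, mem_Ioc]
      tauto
    rw [this]
    rcases le_or_gt t 0 with h0 | h0
    · have : Ioc (0:ℝ) t = ∅ := Ioc_eq_empty (not_lt.mpr h0)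
      rw [this, empty_inter, measure_empty, min_eq_left h.le,
        eq_comm, ENNReal.ofReal_eq_zero]
      exact h0
    · have : Ioc (0:ℝ) t ∩ Ioo 0 1 = Ioc 0 t := inter_eq_self_of_subset_left
        (fun y hy => ⟨hy.1, lt_of_le_of_lt hy.2 h⟩)
      rw [this, Real.volume_Ioc, min_eq_left h.le, sub_zero]

/-- Pushforward of the uniform measure under the quantile function recovers `μ`. -/
lemma map_quantile_unif (μ : Measure ℝ) [IsProbabilityMeasure μ] :
    unif.map (quantile μ) = μ := by
  have hPM : IsProbabilityMeasure (unif.map (quantile μ)) :=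
    Measure.isProbabilityMeasure_map (measurable_quantile μ).aemeasurable
  refine Measure.ext_of_Iic _ _ (fun x => ?_)
  rw [Measure.map_apply (measurable_quantile μ) measurableSet_Iic]
  have hpre : quantile μ ⁻¹' Iic x ∩ Ioo 0 1 = Iic (cdf μ x) ∩ Ioo 0 1 := by
    ext u
    simp only [mem_inter_iff, mem_preimage, mem_Iic, mem_Ioo, and_congr_left_iff]
    intro hu
    rw [quantile_le_iff hu.1 hu.2]
  have : unif (quantile μ ⁻¹' Iic x) = unif (Iic (cdf μ x)) := by
    rw [unif, Measure.restrict_apply (measurable_quantile μ measurableSet_Iic),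
      Measure.restrict_apply measurableSet_Iic, hpre]
  rw [this, unif_Iic, min_eq_left (cdf_le_one μ x), ofReal_cdf]





/-- If every point of `S` lies in a null set `C x`, with `C` monotone, then `S` is null. -/
lemma null_of_null_cover_mono (μ : Measure ℝ) {S : Set ℝ} (C : ℝ → Set ℝ)
    (hmono : ∀ x y, x ≤ y → C x ⊆ C y) (hmem : ∀ x ∈ S, x ∈ C x)
    (hnull : ∀ x ∈ S, μ (C x) = 0) : μ S = 0 := by
  rcases S.eq_empty_or_nonempty with rfl | hne
  · simp
  by_cases hbdd : BddAbove S
  · set t := sSup S with ht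
    rcases exists_seq_tendsto_sSup hne hbdd with ⟨s, hsm, hst, hsS⟩
    have hcover : S ⊆ (⋃ n, C (s n)) ∪ (S ∩ {t}) := by
      intro x hx
      rcases eq_or_lt_of_le (le_csSup hbdd hx) with heq | hlt
      · exact Or.inr ⟨hx, heq⟩
      · have : ∀ᶠ n in atTop, x < s n := hst.eventually (eventually_gt_nhds hlt)
        rcases this.exists with ⟨n, hn⟩
        exact Or.inl (mem_iUnion.mpr ⟨n, hmono x (s n) hn.le (hmem x hx)⟩)
    refine measure_mono_null hcover (measure_union_null ?_ ?_)
    · exact measure_iUnion_null (fun n => hnull _ (hsS n))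
    · rcases (S ∩ {t}).eq_empty_or_nonempty with h | ⟨y, hyS, hyt⟩
      · simp [h]
      · have : S ∩ {t} ⊆ C y := by
          rintro z ⟨hzS, hzt⟩
          have : z = y := by
            simp only [mem_singleton_iff] at hzt hyt; rw [hzt, hyt]
          rw [this]; exact hmem y hyS
        exact measure_mono_null this (hnull y hyS)
  · have hcover : S ⊆ ⋃ n : ℕ, ⋃ (h : ∃ x ∈ S, (n:ℝ) ≤ x), C (h.choose) := by
      intro x hx
      rcases exists_nat_ge x with ⟨n, hn⟩
      have hex : ∃ y ∈ S, (n:ℝ) ≤ y := by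
        rcases not_bddAbove_iff.mp hbdd (n:ℝ) with ⟨y, hyS, hy⟩
        exact ⟨y, hyS, hy.le⟩
      refine mem_iUnion.mpr ⟨n, mem_iUnion.mpr ⟨hex, ?_⟩⟩
      exact hmono x _ (le_trans hn hex.choose_spec.2) (hmem x hx)
    refine measure_mono_null hcover (measure_iUnion_null (fun n => ?_))
    by_cases hex : ∃ y ∈ S, (n:ℝ) ≤ y
    · refine measure_mono_null (iUnion_subset (fun h => ?_)) (hnull _ hex.choose_spec.1)
      exact subset_rfl
    · simp [hex]

lemma null_of_null_cover_anti (μ : Measure ℝ) {S : Set ℝ} (C : ℝ → Set ℝ)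
    (hanti : ∀ x y, x ≤ y → C y ⊆ C x) (hmem : ∀ x ∈ S, x ∈ C x)
    (hnull : ∀ x ∈ S, μ (C x) = 0) : μ S = 0 := by
  rcases S.eq_empty_or_nonempty with rfl | hne
  · simp
  by_cases hbdd : BddBelow S
  · set t := sInf S with ht
    rcases exists_seq_tendsto_sInf hne hbdd with ⟨s, hsm, hst, hsS⟩
    have hcover : S ⊆ (⋃ n, C (s n)) ∪ (S ∩ {t}) := by
      intro x hx
      rcases eq_or_lt_of_le (csInf_le hbdd hx) with heq | hlt
      · exact Or.inr ⟨hx, heq.symm⟩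
      · have : ∀ᶠ n in atTop, s n < x := hst.eventually (eventually_lt_nhds hlt)
        rcases this.exists with ⟨n, hn⟩
        exact Or.inl (mem_iUnion.mpr ⟨n, hanti (s n) x hn.le (hmem x hx)⟩)
    refine measure_mono_null hcover (measure_union_null ?_ ?_)
    · exact measure_iUnion_null (fun n => hnull _ (hsS n))
    · rcases (S ∩ {t}).eq_empty_or_nonempty with h | ⟨y, hyS, hyt⟩
      · simp [h]
      · have : S ∩ {t} ⊆ C y := by
          rintro z ⟨hzS, hzt⟩
          have : z = y := by
            simp only [mem_singleton_iff] at hzt hyt; rw [hzt, hyt]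
          rw [this]; exact hmem y hyS
        exact measure_mono_null this (hnull y hyS)
  · have hcover : S ⊆ ⋃ n : ℕ, ⋃ (h : ∃ x ∈ S, x ≤ -(n:ℝ)), C (h.choose) := by
      intro x hx
      rcases exists_nat_ge (-x) with ⟨n, hn⟩
      have hex : ∃ y ∈ S, y ≤ -(n:ℝ) := by
        rcases not_bddBelow_iff.mp hbdd (-(n:ℝ)) with ⟨y, hyS, hy⟩
        exact ⟨y, hyS, hy.le⟩
      refine mem_iUnion.mpr ⟨n, mem_iUnion.mpr ⟨hex, ?_⟩⟩
      refine hanti _ x (le_trans hex.choose_spec.2 (by linarith)) (hmem x hx)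
    refine measure_mono_null hcover (measure_iUnion_null (fun n => ?_))
    by_cases hex : ∃ y ∈ S, y ≤ -(n:ℝ)
    · refine measure_mono_null (iUnion_subset (fun h => ?_)) (hnull _ hex.choose_spec.1)
      exact subset_rfl
    · simp [hex]

/-- Left-continuous cdf, `μ (Iio x)` as a real number. -/
def lcdf (μ : Measure ℝ) (x : ℝ) : ℝ := (μ (Iio x)).toReal

/-- The distributional transform. -/
def dtf (μ : Measure ℝ) (p : ℝ × ℝ) : ℝ :=
  lcdf μ p.1 + p.2 * (cdf μ p.1 - lcdf μ p.1)

variable {μ : Measure ℝ} [IsProbabilityMeasure μ]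

lemma lcdf_nonneg (x : ℝ) : 0 ≤ lcdf μ x := ENNReal.toReal_nonneg

lemma monotone_lcdf : Monotone (lcdf μ) := fun x y hxy =>
  ENNReal.toReal_mono (measure_ne_top μ _) (measure_mono (Iio_subset_Iio hxy))

lemma measurable_lcdf : Measurable (lcdf μ) := monotone_lcdf.measurable

lemma ofReal_lcdf (x : ℝ) : ENNReal.ofReal (lcdf μ x) = μ (Iio x) :=
  ENNReal.ofReal_toReal (measure_ne_top μ _)

lemma lcdf_le_cdf (x : ℝ) : lcdf μ x ≤ cdf μ x := by
  rw [cdf_eq_real]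
  exact ENNReal.toReal_mono (measure_ne_top μ _) (measure_mono Iio_subset_Iic_self)

lemma cdf_le_lcdf {y x : ℝ} (h : y < x) : cdf μ y ≤ lcdf μ x := by
  rw [cdf_eq_real]
  exact ENNReal.toReal_mono (measure_ne_top μ _) (measure_mono (Iic_subset_Iio.mpr h))

lemma meas_singleton (x : ℝ) : μ {x} = ENNReal.ofReal (cdf μ x - lcdf μ x) := by
  have h1 : μ (Iic x) = μ (Iio x) + μ {x} := by
    rw [← measure_union (by simp) (measurableSet_singleton x), Iio_union_right]
  rw [ENNReal.ofReal_sub _ (lcdf_nonneg x), ofReal_cdf, ofReal_lcdf, h1,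
    ENNReal.add_sub_cancel_left (measure_ne_top μ _)]

lemma measurable_dtf : Measurable (dtf μ) := by
  apply Measurable.add (measurable_lcdf.comp measurable_fst)
  exact measurable_snd.mul
    (((monotone_cdf μ).measurable.comp measurable_fst).sub
      (measurable_lcdf.comp measurable_fst))

lemma dtf_le_cdf {x v : ℝ} (hv1 : v ≤ 1) : dtf μ (x, v) ≤ cdf μ x := by
  have h := lcdf_le_cdf (μ := μ) x
  have : v * (cdf μ x - lcdf μ x) ≤ 1 * (cdf μ x - lcdf μ x) :=
    mul_le_mul_of_nonneg_right hv1 (by linarith)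
  simp only [dtf]; nlinarith

lemma lcdf_le_dtf {x v : ℝ} (hv0 : 0 ≤ v) : lcdf μ x ≤ dtf μ (x, v) := by
  have h := lcdf_le_cdf (μ := μ) x
  have : 0 ≤ v * (cdf μ x - lcdf μ x) := mul_nonneg hv0 (by linarith)
  simp only [dtf]; linarith

/-- On the quantile side: `lcdf μ (quantile μ u) ≤ u`. -/
lemma lcdf_quantile_le {u : ℝ} (h0 : 0 < u) (h1 : u < 1) :
    lcdf μ (quantile μ u) ≤ u := by
  set q := quantile μ u with hq
  have key : μ (Iio q) ≤ ENNReal.ofReal u := by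
    have hun : Iio q = ⋃ n : ℕ, Iic (q - 1 / (n + 1)) := by
      ext y
      simp only [mem_Iio, mem_iUnion, mem_Iic]
      constructor
      · intro h
        rcases exists_nat_one_div_lt (sub_pos.mpr h) with ⟨n, hn⟩
        exact ⟨n, by linarith⟩
      · rintro ⟨n, hn⟩
        have : (0:ℝ) < 1 / (n + 1) := by positivity
        linarith
    have hd : Directed (· ⊆ ·) (fun n : ℕ => Iic (q - 1 / ((n:ℝ) + 1))) := by
      apply Monotone.directed_le
      intro m n hmn
      apply Iic_subset_Iic.mpr
      have : 1 / ((n:ℝ) + 1) ≤ 1 / ((m:ℝ) + 1) := by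
        apply one_div_le_one_div_of_le (by positivity)
        exact_mod_cast add_le_add_left (Nat.cast_le.mpr hmn) 1
      linarith
    rw [hun, hd.measure_iUnion]
    apply iSup_le
    intro n
    rw [← ofReal_cdf]
    apply ENNReal.ofReal_le_ofReal
    have hlt : q - 1 / ((n:ℝ) + 1) < q := by
      have : (0:ℝ) < 1 / (n + 1) := by positivity
      linarith
    exact ((lt_quantile_iff h0 h1).mp hlt).le
  calc lcdf μ q = (μ (Iio q)).toReal := rfl
    _ ≤ u := ENNReal.toReal_le_of_le_ofReal h0.le key


/-- The measurable null set of "bad" points for the distributional transform. -/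
def badSet (μ : Measure ℝ) : Set ℝ :=
  {x | cdf μ x = 0} ∪ {x | μ (Ici x) = 0} ∪ ⋃ q : ℚ, {x | (q:ℝ) < x ∧ μ (Ioc (q:ℝ) x) = 0}

lemma measurableSet_badSet : MeasurableSet (badSet μ) := by
  apply MeasurableSet.union
  · apply MeasurableSet.union
    · exact (monotone_cdf μ).measurable (measurableSet_singleton 0)
    · have : Antitone (fun x => μ (Ici x)) :=
        fun x y hxy => measure_mono (Ici_subset_Ici.mpr hxy)
      exact this.measurable (measurableSet_singleton 0)
  · apply MeasurableSet.iUnion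
    intro q
    have h1 : Monotone (fun x => μ (Ioc (q:ℝ) x)) :=
      fun x y hxy => measure_mono (Ioc_subset_Ioc_right hxy)
    exact measurableSet_Ioi.inter (h1.measurable (measurableSet_singleton 0))

lemma badSet_null : μ (badSet μ) = 0 := by
  apply measure_union_null
  · apply measure_union_null
    · apply null_of_null_cover_mono μ Iic
      · exact fun x y h => Iic_subset_Iic.mpr h
      · exact fun x _ => self_mem_Iic
      · intro x hx
        rw [← ofReal_cdf]
        simp only [mem_setOf_eq] at hx
        simp [hx]
    · apply null_of_null_cover_anti μ Ici
      · exact fun x y h => Ici_subset_Ici.mpr h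
      · exact fun x _ => self_mem_Ici
      · exact fun x hx => hx
  · apply measure_iUnion_null
    intro q
    apply null_of_null_cover_mono μ (fun x => Ioc (q:ℝ) x)
    · exact fun x y h => Ioc_subset_Ioc_right h
    · exact fun x hx => ⟨hx.1, le_rfl⟩
    · exact fun x hx => hx.2

lemma meas_Ioc (y x : ℝ) (h : y ≤ x) :
    μ (Ioc y x) = ENNReal.ofReal (cdf μ x - cdf μ y) := by
  have : Ioc y x = Iic x \ Iic y := by
    ext z; simp only [mem_Ioc, mem_diff, mem_Iic, not_le]; tauto
  rw [this, measure_diff (Iic_subset_Iic.mpr h) measurableSet_Iic.nullMeasurableSet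
    (measure_ne_top μ _), ← ofReal_cdf, ← ofReal_cdf,
    ENNReal.ofReal_sub _ (cdf_nonneg μ y)]

/-- Pointwise identity: outside the bad set, the quantile of the distributional transform
recovers the point. -/
lemma quantile_dtf {x v : ℝ} (hx : x ∉ badSet μ) (hv : v ∈ Ioo (0:ℝ) 1) :
    quantile μ (dtf μ (x, v)) = x := by
  have hcdf0 : 0 < cdf μ x := by
    rcases lt_or_eq_of_le (cdf_nonneg μ x) with h | h
    · exact h
    · exact absurd (Or.inl (Or.inl h.symm)) hx
  have hIci : μ (Ici x) ≠ 0 := fun h => hx (Or.inl (Or.inr h))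
  have hflat : ∀ y, y < x → cdf μ y < cdf μ x := by
    intro y hy
    rcases lt_or_eq_of_le (monotone_cdf μ hy.le) with h | h
    · exact h
    · exfalso
      rcases exists_rat_btwn hy with ⟨q, hq1, hq2⟩
      apply hx
      refine Or.inr (mem_iUnion.mpr ⟨q, hq2, ?_⟩)
      rw [meas_Ioc _ _ hq2.le, ENNReal.ofReal_eq_zero]
      have : cdf μ y ≤ cdf μ (q:ℝ) := monotone_cdf μ hq1.le
      have : cdf μ (q:ℝ) ≤ cdf μ x := monotone_cdf μ hq2.le
      linarith
  set u := dtf μ (x, v) with hu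
  have hΔ : 0 ≤ cdf μ x - lcdf μ x := sub_nonneg.mpr (lcdf_le_cdf x)
  have hucdf : u ≤ cdf μ x := dtf_le_cdf hv.2.le
  have hcdflt : ∀ y, y < x → cdf μ y < u := by
    intro y hy
    rcases lt_or_eq_of_le hΔ with hΔpos | hΔ0
    · have : lcdf μ x < u := by
        have : 0 < v * (cdf μ x - lcdf μ x) := mul_pos hv.1 hΔpos
        simp only [hu, dtf]; linarith
      exact lt_of_le_of_lt (cdf_le_lcdf hy) this
    · have hx0 : cdf μ x - lcdf μ x = 0 := hΔ0.symm
      have hux : u = cdf μ x := by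
        simp only [hu, dtf, hx0, mul_zero, add_zero]; linarith
      rw [hux]
      exact hflat y hy
  have hu0 : 0 < u := by
    rcases lt_or_eq_of_le hΔ with hΔpos | hΔ0
    · have : 0 < v * (cdf μ x - lcdf μ x) := mul_pos hv.1 hΔpos
      have := lcdf_nonneg (μ := μ) x
      simp only [hu, dtf]; linarith
    · have hx0 : cdf μ x - lcdf μ x = 0 := hΔ0.symm
      have hux : u = cdf μ x := by
        simp only [hu, dtf, hx0, mul_zero, add_zero]; linarith
      rw [hux]; exact hcdf0
  have hu1 : u < 1 := by
    rcases lt_or_eq_of_le hΔ with hΔpos | hΔ0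
    · have : v * (cdf μ x - lcdf μ x) < 1 * (cdf μ x - lcdf μ x) :=
        mul_lt_mul_of_pos_right hv.2 hΔpos
      have := cdf_le_one μ x
      simp only [hu, dtf]; nlinarith
    · have hx0 : cdf μ x - lcdf μ x = 0 := hΔ0.symm
      have hux : u = cdf μ x := by
        simp only [hu, dtf, hx0, mul_zero, add_zero]; linarith
      rw [hux]
      rcases lt_or_eq_of_le (cdf_le_one μ x) with h | h
      · exact h
      · exfalso
        apply hIci
        have h1 : μ {x} = 0 := by
          rw [meas_singleton, ← hΔ0]; simp
        have h2 : μ (Ioi x) = 0 := by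
          have : μ (Iic x) = 1 := by rw [← ofReal_cdf, h]; simp
          have htot : μ (Iic x) + μ (Ioi x) = 1 := by
            rw [← measure_union (by simp) measurableSet_Ioi, Iic_union_Ioi, measure_univ]
          rw [this] at htot
          have := measure_ne_top μ (Ioi x)
          exact by
            by_contra hne
            have : 0 < μ (Ioi x) := pos_iff_ne_zero.mpr hne
            exact absurd htot (by
              intro habs
              have h1' : (1:ℝ≥0∞) + 0 < 1 + μ (Ioi x) := by
                exact ENNReal.add_lt_add_left (by simp) this
              simp only [add_zero] at h1'
              rw [habs] at h1'
              exact lt_irrefl _ h1')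
        have : Ici x = {x} ∪ Ioi x := by
          ext z; simp only [mem_Ici, mem_union, mem_singleton_iff, mem_Ioi]
          constructor
          · intro h; rcases eq_or_lt_of_le h with h | h
            · exact Or.inl h.symm
            · exact Or.inr h
          · rintro (rfl | h); exact le_rfl; exact h.le
        rw [this]
        exact measure_union_null h1 h2
  -- now conclude
  apply le_antisymm
  · exact (quantile_le_iff hu0 hu1).mpr hucdf
  · rw [quantile_eq hu0 hu1]
    apply le_csInf (qSet_nonempty hu1)
    intro y hy
    by_contra hlt
    push_neg at hlt
    exact absurd hy (not_le.mpr (hcdflt y hlt))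

/-- The a.e. identity for the distributional transform. -/
lemma ae_quantile_dtf : ∀ᵐ p ∂(μ.prod unif), quantile μ (dtf μ p) = p.1 := by
  have hsub : {p : ℝ × ℝ | ¬ quantile μ (dtf μ p) = p.1} ⊆
      (badSet μ ×ˢ univ) ∪ (univ ×ˢ (Ioo (0:ℝ) 1)ᶜ) := by
    intro p hp
    by_contra hmem
    simp only [mem_union, mem_prod, mem_univ, and_true, true_and, mem_compl_iff,
      not_or, not_not] at hmem
    exact hp (quantile_dtf hmem.1 hmem.2)
  apply measure_mono_null hsub
  apply measure_union_null
  · rw [Measure.prod_prod, badSet_null, zero_mul]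
  · rw [Measure.prod_prod]
    have : unif ((Ioo (0:ℝ) 1)ᶜ) = 0 := by
      rw [unif, Measure.restrict_apply measurableSet_Ioo.compl]
      simp
    rw [this, mul_zero]


lemma unif_compl_Ioo : unif ((Ioo (0:ℝ) 1)ᶜ) = 0 := by
  rw [unif, Measure.restrict_apply measurableSet_Ioo.compl]
  simp

lemma unif_of_superset {s : Set ℝ} (h : Ioo (0:ℝ) 1 ⊆ s) : unif s = 1 := by
  apply le_antisymm
  · rw [← measure_univ (μ := unif)]
    exact measure_mono (subset_univ s)
  · calc (1:ℝ≥0∞) = unif (Ioo 0 1) := by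
          rw [unif, Measure.restrict_apply measurableSet_Ioo]
          simp [Real.volume_Ioo]
      _ ≤ unif s := measure_mono h

/-- **The distributional transform is uniform.** -/
lemma map_dtf (μ : Measure ℝ) [IsProbabilityMeasure μ] :
    (μ.prod unif).map (dtf μ) = unif := by
  have hm : Measurable (dtf μ) := measurable_dtf
  have hPM : IsProbabilityMeasure ((μ.prod unif).map (dtf μ)) :=
    Measure.isProbabilityMeasure_map hm.aemeasurable
  refine Measure.ext_of_Iic _ _ (fun u => ?_)
  rw [Measure.map_apply hm measurableSet_Iic, unif_Iic,
    Measure.prod_apply (hm measurableSet_Iic)]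
  have hslice : ∀ x : ℝ, Prod.mk x ⁻¹' (dtf μ ⁻¹' Iic u) = {v | dtf μ (x, v) ≤ u} := by
    intro x; rfl
  simp only [hslice]
  rcases le_or_gt u 0 with hu0 | hu0
  · -- u ≤ 0 : both sides zero
    have hrhs : ENNReal.ofReal (min u 1) = 0 := by
      rw [ENNReal.ofReal_eq_zero]
      exact le_trans (min_le_left _ _) hu0
    rw [hrhs]
    have hae : ∀ᵐ x ∂μ, unif {v | dtf μ (x, v) ≤ u} = 0 := by
      have hcdf0 : ∀ᵐ x ∂μ, ¬ cdf μ x = 0 := by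
        have : μ {x | cdf μ x = 0} = 0 := by
          apply null_of_null_cover_mono μ Iic
          · exact fun x y h => Iic_subset_Iic.mpr h
          · exact fun x _ => self_mem_Iic
          · intro x hx
            rw [← ofReal_cdf]
            simp only [mem_setOf_eq] at hx
            simp [hx]
        exact (ae_iff (p := fun x => ¬ cdf μ x = 0)).mpr (by simpa using this)
      filter_upwards [hcdf0] with x hx
      have hpos : 0 < cdf μ x := lt_of_le_of_ne (cdf_nonneg μ x) (fun h => hx h.symm)
      apply measure_mono_null (t := (Ioo (0:ℝ) 1)ᶜ) _ unif_compl_Ioo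
      intro v hv
      simp only [mem_setOf_eq] at hv
      simp only [mem_compl_iff, mem_Ioo, not_and, not_lt]
      intro hv0
      by_contra hv1
      push_neg at hv1
      -- v ∈ (0,1), show dtf > u contradiction
      have hΔ : 0 ≤ cdf μ x - lcdf μ x := sub_nonneg.mpr (lcdf_le_cdf x)
      rcases lt_or_eq_of_le hΔ with hΔp | hΔ0
      · have : 0 < v * (cdf μ x - lcdf μ x) := mul_pos hv0 hΔp
        have hl := lcdf_nonneg (μ := μ) x
        simp only [dtf] at hv
        linarith
      · have hx0 : cdf μ x - lcdf μ x = 0 := hΔ0.symm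
        simp only [dtf, hx0, mul_zero, add_zero] at hv
        have : lcdf μ x = cdf μ x := by linarith
        linarith [hv, hpos, hu0, this]
    calc ∫⁻ x, unif {v | dtf μ (x, v) ≤ u} ∂μ = ∫⁻ _, 0 ∂μ := lintegral_congr_ae hae
      _ = 0 := lintegral_zero
  rcases lt_or_ge u 1 with hu1 | hu1
  · -- main case 0 < u < 1
    set q := quantile μ u with hq
    have hucdf : u ≤ cdf μ q := le_cdf_quantile hu0 hu1
    have hlcdf : lcdf μ q ≤ u := lcdf_quantile_le hu0 hu1
    have hlt : ∀ y, y < q → cdf μ y < u := fun y hy => (lt_quantile_iff hu0 hu1).mp hy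
    have key : (∫⁻ x, unif {v | dtf μ (x, v) ≤ u} ∂μ) =
        (∫⁻ x in Iio q, unif {v | dtf μ (x, v) ≤ u} ∂μ) +
        (∫⁻ x in Ici q, unif {v | dtf μ (x, v) ≤ u} ∂μ) := by
      rw [← compl_Iio (a := q)]
      exact (lintegral_add_compl _ measurableSet_Iio).symm
    rw [key]
    have hIio : (∫⁻ x in Iio q, unif {v | dtf μ (x, v) ≤ u} ∂μ) = μ (Iio q) := by
      have : ∀ x ∈ Iio q, unif {v | dtf μ (x, v) ≤ u} = 1 := by
        intro x hx
        apply unif_of_superset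
        intro v hv
        simp only [mem_setOf_eq]
        calc dtf μ (x, v) ≤ cdf μ x := dtf_le_cdf hv.2.le
          _ ≤ u := (hlt x hx).le
      calc (∫⁻ x in Iio q, unif {v | dtf μ (x, v) ≤ u} ∂μ)
          = ∫⁻ _ in Iio q, 1 ∂μ := by
            apply lintegral_congr_ae
            apply (ae_restrict_iff' measurableSet_Iio).mpr
            exact Filter.Eventually.of_forall this
        _ = μ (Iio q) := by simp
    have hIci : (∫⁻ x in Ici q, unif {v | dtf μ (x, v) ≤ u} ∂μ) =
        ENNReal.ofReal (u - lcdf μ q) := by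
      have hsplit : (Ici q : Set ℝ) = {q} ∪ Ioi q := by
        ext z
        simp only [mem_Ici, mem_union, mem_singleton_iff, mem_Ioi]
        constructor
        · intro h; rcases eq_or_lt_of_le h with h | h
          · exact Or.inl h.symm
          · exact Or.inr h
        · rintro (rfl | h); exacts [le_rfl, h.le]
      rw [hsplit, lintegral_union measurableSet_Ioi (by simp)]
      have hsing : (∫⁻ x in {q}, unif {v | dtf μ (x, v) ≤ u} ∂μ) =
          ENNReal.ofReal (u - lcdf μ q) := by
        rw [lintegral_singleton]
        rcases eq_or_lt_of_le (sub_nonneg.mpr (lcdf_le_cdf (μ := μ) q)) with hΔ0 | hΔp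
        · -- no atom: both sides 0
          have hatom : μ {q} = 0 := by rw [meas_singleton, ← hΔ0]; simp
          have hequ : u = lcdf μ q := by
            have : lcdf μ q = cdf μ q := by linarith [hΔ0]
            linarith [hucdf, hlcdf, this]
          rw [hatom, mul_zero, ← hequ]
          simp
        · -- atom at q
          set Δ := cdf μ q - lcdf μ q with hΔ
          have hset : {v | dtf μ (q, v) ≤ u} = Iic ((u - lcdf μ q) / Δ) := by
            ext v
            simp only [mem_setOf_eq, mem_Iic, dtf]
            rw [le_div_iff₀ hΔp]
            constructor <;> intro h <;> nlinarith
          rw [hset, unif_Iic, meas_singleton]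
          have hτ0 : 0 ≤ (u - lcdf μ q) / Δ := div_nonneg (by linarith) hΔp.le
          have hτ1 : (u - lcdf μ q) / Δ ≤ 1 := by
            rw [div_le_one hΔp]
            simp only [hΔ]; linarith
          rw [min_eq_left hτ1, ← ENNReal.ofReal_mul hτ0, div_mul_cancel₀ _ (ne_of_gt hΔp)]
      have hIoi : (∫⁻ x in Ioi q, unif {v | dtf μ (x, v) ≤ u} ∂μ) = 0 := by
        have hae : ∀ᵐ x ∂μ, x ∈ Ioi q → unif {v | dtf μ (x, v) ≤ u} = 0 := by
          have hflat : μ {x | q < x ∧ μ (Ioc q x) = 0} = 0 := by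
            apply null_of_null_cover_mono μ (fun x => Ioc q x)
            · exact fun x y h => Ioc_subset_Ioc_right h
            · exact fun x hx => ⟨hx.1, le_rfl⟩
            · exact fun x hx => hx.2
          have hflat' : ∀ᵐ x ∂μ, ¬ (q < x ∧ μ (Ioc q x) = 0) :=
            (ae_iff (p := fun x => ¬ (q < x ∧ μ (Ioc q x) = 0))).mpr (by simpa using hflat)
          filter_upwards [hflat'] with x hx hxq
          simp only [mem_Ioi] at hxq
          have hnot : μ (Ioc q x) ≠ 0 := by
            intro h; exact hx ⟨hxq, h⟩
          have hqx : cdf μ q < cdf μ x := by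
            rcases lt_or_eq_of_le (monotone_cdf μ hxq.le) with h | h
            · exact h
            · exfalso; apply hnot
              rw [meas_Ioc _ _ hxq.le, ← h]
              simp
          have hul : u ≤ lcdf μ x := le_trans hucdf (cdf_le_lcdf hxq)
          apply measure_mono_null (t := (Ioo (0:ℝ) 1)ᶜ) _ unif_compl_Ioo
          intro v hv
          simp only [mem_setOf_eq] at hv
          simp only [mem_compl_iff, mem_Ioo, not_and, not_lt]
          intro hv0
          by_contra hv1
          push_neg at hv1
          have hΔx : 0 ≤ cdf μ x - lcdf μ x := sub_nonneg.mpr (lcdf_le_cdf x)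
          rcases lt_or_eq_of_le hΔx with hΔp | hΔ0
          · have : 0 < v * (cdf μ x - lcdf μ x) := mul_pos hv0 hΔp
            simp only [dtf] at hv
            linarith
          · have hx0 : cdf μ x - lcdf μ x = 0 := hΔ0.symm
            simp only [dtf, hx0, mul_zero, add_zero] at hv
            -- lcdf x = cdf x > cdf q ≥ u, so dtf = lcdf x > u
            have : lcdf μ x = cdf μ x := by linarith
            linarith [hucdf, hqx, hv, this]
        calc (∫⁻ x in Ioi q, unif {v | dtf μ (x, v) ≤ u} ∂μ)
            = ∫⁻ _ in Ioi q, 0 ∂μ := by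
              apply lintegral_congr_ae
              exact (ae_restrict_iff' measurableSet_Ioi).mpr hae
          _ = 0 := by simp
      rw [hsing, hIoi, add_zero]
    rw [hIio, hIci, ← ofReal_lcdf, ← ENNReal.ofReal_add (lcdf_nonneg q) (by linarith),
      min_eq_left hu1.le]
    ring_nf
  · -- u ≥ 1
    have : ∀ x : ℝ, unif {v | dtf μ (x, v) ≤ u} = 1 := by
      intro x
      apply unif_of_superset
      intro v hv
      simp only [mem_setOf_eq]
      calc dtf μ (x, v) ≤ cdf μ x := dtf_le_cdf hv.2.le
        _ ≤ 1 := cdf_le_one μ x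
        _ ≤ u := hu1
    simp only [this]
    rw [lintegral_one, measure_univ, min_eq_right hu1]
    simp


/-- "Goodness" of a point `u` for quantile convergence: one may approach `quantile μ u`
by quantiles at slightly shifted levels. -/
def GoodAt (μ : Measure ℝ) (u : ℝ) : Prop :=
  ∀ ε > (0:ℝ), ∃ δ > (0:ℝ), u + δ < 1 ∧ 0 < u - δ ∧
    quantile μ (u + δ) ≤ quantile μ u + ε ∧ quantile μ u - ε ≤ quantile μ (u - δ)

/-- Clamped quantile function, globally monotone. -/
def clampQ (μ : Measure ℝ) (a b u : ℝ) : ℝ := sInf {x | max a (min b u) ≤ cdf μ x}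

variable {μ : Measure ℝ} [IsProbabilityMeasure μ]

lemma monotone_clampQ {a b : ℝ} (ha : 0 < a) (hab : a ≤ b) (hb : b < 1) :
    Monotone (clampQ μ a b) := by
  intro u v huv
  have h1 : max a (min b u) ≤ max a (min b v) :=
    max_le_max le_rfl (min_le_min le_rfl huv)
  apply csInf_le_csInf
  · exact qSet_bddBelow (lt_of_lt_of_le ha (le_max_left _ _))
  · apply qSet_nonempty
    exact lt_of_le_of_lt (max_le (le_trans hab le_rfl) (min_le_left _ _)) hb
  · exact fun x hx => le_trans h1 hx

lemma clampQ_eq {a b u : ℝ} (ha : 0 < a) (hb : b < 1) (hu : u ∈ Ioo a b) :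
    clampQ μ a b u = quantile μ u := by
  have h0 : 0 < u := lt_trans ha hu.1
  have h1 : u < 1 := lt_trans hu.2 hb
  have : max a (min b u) = u := by
    rw [min_eq_right hu.2.le, max_eq_right hu.1.le]
  rw [clampQ, this, quantile_eq h0 h1]

/-- Almost every `u` (up to a countable set) in `(0,1)` is a good point. -/
lemma exists_countable_bad (μ : Measure ℝ) [IsProbabilityMeasure μ] :
    ∃ bad : Set ℝ, bad.Countable ∧ ∀ u ∈ Ioo (0:ℝ) 1, u ∉ bad → GoodAt μ u := by
  classical
  refine ⟨⋃ m : ℕ, {u | ¬ ContinuousAt (clampQ μ (1 / (m + 2)) (1 - 1 / (m + 2))) u}, ?_, ?_⟩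
  · apply countable_iUnion
    intro m
    have ham : (0:ℝ) < 1 / ((m:ℝ) + 2) := by positivity
    have hbm : 1 - 1 / ((m:ℝ) + 2) < 1 := by linarith
    have hab : 1 / ((m:ℝ) + 2) ≤ 1 - 1 / ((m:ℝ) + 2) := by
      have : 1 / ((m:ℝ) + 2) ≤ 1 / 2 := by
        apply one_div_le_one_div_of_le (by norm_num)
        have : (0:ℝ) ≤ (m:ℝ) := Nat.cast_nonneg m
        linarith
      linarith
    exact (monotone_clampQ ham hab hbm).countable_not_continuousAt
  · intro u hu hbad
    -- find m with u ∈ Ioo (1/(m+2)) (1 - 1/(m+2))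
    have hu1 : 0 < u := hu.1
    have hu2 : u < 1 := hu.2
    have hmin : 0 < min u (1 - u) := lt_min hu1 (by linarith)
    obtain ⟨m, hm⟩ : ∃ m : ℕ, 1 / ((m:ℝ) + 2) < min u (1 - u) := by
      rcases exists_nat_one_div_lt hmin with ⟨m, hm⟩
      refine ⟨m, ?_⟩
      have hm1 : (0:ℝ) < (m:ℝ) + 1 := by positivity
      have : 1 / ((m:ℝ) + 2) ≤ 1 / ((m:ℝ) + 1) :=
        one_div_le_one_div_of_le hm1 (by linarith)
      exact lt_of_le_of_lt this hm
    set a := 1 / ((m:ℝ) + 2) with hadef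
    set b := 1 - 1 / ((m:ℝ) + 2) with hbdef
    have ha : 0 < a := by positivity
    have hb : b < 1 := by simp only [hbdef]; linarith
    have hua : a < u := lt_of_lt_of_le hm (min_le_left _ _)
    have hub : u < b := by
      have := lt_of_lt_of_le hm (min_le_right _ _)
      simp only [hbdef]; linarith
    have hcont : ContinuousAt (clampQ μ a b) u := by
      by_contra hc
      exact hbad (mem_iUnion.mpr ⟨m, hc⟩)
    intro ε hε
    have : ∀ᶠ w in 𝓝 u, |clampQ μ a b w - clampQ μ a b u| < ε := by
      have := Metric.tendsto_nhds.mp hcont ε hε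
      simpa [Real.dist_eq] using this
    rcases Metric.eventually_nhds_iff.mp (this.and (eventually_mem_nhds_iff.mpr
      (Ioo_mem_nhds hua hub))) with ⟨δ₀, hδ₀, hball⟩
    set δ := δ₀ / 2 with hδdef
    have hδ : 0 < δ := by positivity
    have hup : u + δ ∈ Ioo a b ∧ |clampQ μ a b (u + δ) - clampQ μ a b u| < ε := by
      have h := hball (y := u + δ) (by
        rw [Real.dist_eq, add_sub_cancel_left, abs_of_pos hδ]
        simp only [hδdef]; linarith)
      exact ⟨mem_of_mem_nhds h.2, h.1⟩
    have hdn : u - δ ∈ Ioo a b ∧ |clampQ μ a b (u - δ) - clampQ μ a b u| < ε := by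
      have h := hball (y := u - δ) (by
        rw [Real.dist_eq]
        have heq : u - δ - u = -δ := by ring
        rw [heq, abs_neg, abs_of_pos hδ]
        simp only [hδdef]; linarith)
      exact ⟨mem_of_mem_nhds h.2, h.1⟩
    refine ⟨δ, hδ, ?_, ?_, ?_, ?_⟩
    · exact lt_trans hup.1.2 hb
    · exact lt_trans ha hdn.1.1
    · have := abs_lt.mp hup.2
      rw [clampQ_eq ha hb hup.1, clampQ_eq ha hb ⟨hua, hub⟩] at this
      linarith [this.2]
    · have := abs_lt.mp hdn.2
      rw [clampQ_eq ha hb hdn.1, clampQ_eq ha hb ⟨hua, hub⟩] at this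
      linarith [this.1]

/-- Weak convergence implies quantile convergence at good points. -/
lemma tendsto_quantile {P : Measure ℝ} {Pn : ℕ → Measure ℝ} [IsProbabilityMeasure P]
    [∀ n, IsProbabilityMeasure (Pn n)]
    (hweak1 : ∀ f : BoundedContinuousFunction ℝ ℝ,
      Tendsto (fun n => ∫ x, f x ∂(Pn n)) atTop (𝓝 (∫ x, f x ∂P)))
    {u : ℝ} (hu : u ∈ Ioo (0:ℝ) 1) (hg : GoodAt P u) :
    Tendsto (fun n => quantile (Pn n) u) atTop (𝓝 (quantile P u)) := by
  set PM : ProbabilityMeasure ℝ := ⟨P, inferInstance⟩ with hPM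
  set PMn : ℕ → ProbabilityMeasure ℝ := fun n => ⟨Pn n, inferInstance⟩ with hPMn
  have htend : Tendsto PMn atTop (𝓝 PM) :=
    ProbabilityMeasure.tendsto_iff_forall_integral_tendsto.mpr hweak1
  rw [Metric.tendsto_nhds]
  intro ε hε
  obtain ⟨δ, hδ, hδ1, hδ0, hqu, hqd⟩ := hg (ε / 2) (by positivity)
  set x := quantile P u with hx
  -- Upper bound
  have hupper : ∀ᶠ n in atTop, quantile (Pn n) u ≤ x + 3 * ε / 4 := by
    set z := quantile P (u + δ) + ε / 4 with hz
    have hzx : z ≤ x + 3 * ε / 4 := by simp only [hz]; linarith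
    have hPz : ENNReal.ofReal (u + δ) ≤ P (Iio z) := by
      have h1 : u + δ ≤ cdf P (quantile P (u + δ)) :=
        le_cdf_quantile (by linarith) hδ1
      calc ENNReal.ofReal (u + δ) ≤ ENNReal.ofReal (cdf P (quantile P (u+δ))) :=
            ENNReal.ofReal_le_ofReal h1
        _ = P (Iic (quantile P (u+δ))) := ofReal_cdf P _
        _ ≤ P (Iio z) := measure_mono (Iic_subset_Iio.mpr (by simp [hz]; linarith))
    have hliminf : ENNReal.ofReal u < atTop.liminf (fun n => Pn n (Iio z)) := by
      calc ENNReal.ofReal u < ENNReal.ofReal (u + δ) := by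
            rw [ENNReal.ofReal_lt_ofReal_iff (by linarith)]; linarith
        _ ≤ P (Iio z) := hPz
        _ ≤ atTop.liminf (fun n => Pn n (Iio z)) := by
            exact ProbabilityMeasure.le_liminf_measure_open_of_tendsto htend
              (isOpen_Iio (a := z))
    have := Filter.eventually_lt_of_lt_liminf hliminf
    filter_upwards [this] with n hn
    have hcdfn : u ≤ cdf (Pn n) z := by
      have : ENNReal.ofReal u < ENNReal.ofReal (cdf (Pn n) z) := by
        rw [ofReal_cdf]
        exact lt_of_lt_of_le hn (measure_mono Iio_subset_Iic_self)
      by_contra hcon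
      push_neg at hcon
      exact absurd (ENNReal.ofReal_le_ofReal hcon.le) (not_le.mpr this)
    exact le_trans ((quantile_le_iff hu.1 hu.2).mpr hcdfn) hzx
  -- Lower bound
  have hlower : ∀ᶠ n in atTop, x - ε < quantile (Pn n) u := by
    set w := x - ε with hw
    have hwq : w < quantile P (u - δ) := by simp only [hw]; linarith
    have hcdfw : cdf P w < u - δ := (lt_quantile_iff hδ0 (by linarith [hu.2])).mp hwq
    have hlimsup : atTop.limsup (fun n => Pn n (Iic w)) < ENNReal.ofReal u := by
      calc atTop.limsup (fun n => Pn n (Iic w)) ≤ P (Iic w) := by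
            exact ProbabilityMeasure.limsup_measure_closed_le_of_tendsto htend
              (isClosed_Iic (a := w))
        _ = ENNReal.ofReal (cdf P w) := (ofReal_cdf P w).symm
        _ < ENNReal.ofReal u := by
            rw [ENNReal.ofReal_lt_ofReal_iff hu.1]; linarith
    have := Filter.eventually_lt_of_limsup_lt hlimsup
    filter_upwards [this] with n hn
    have hcdfn : cdf (Pn n) w < u := by
      by_contra hcon
      push_neg at hcon
      rw [← ofReal_cdf] at hn
      exact absurd (ENNReal.ofReal_le_ofReal hcon) (not_le.mpr hn)
    exact (lt_quantile_iff hu.1 hu.2).mpr hcdfn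
  filter_upwards [hupper, hlower] with n h1 h2
  rw [Real.dist_eq, abs_lt]
  constructor <;> linarith


/-- Marginal of a product (pi) of probability measures. -/
lemma map_eval_pi {l : ℕ} (μs : Fin l → Measure ℝ) [∀ i, IsProbabilityMeasure (μs i)]
    (i : Fin l) : (Measure.pi μs).map (fun x => x i) = μs i := by
  classical
  have hm : Measurable (fun x : Fin l → ℝ => x i) := measurable_pi_apply i
  have hPM : IsProbabilityMeasure ((Measure.pi μs).map (fun x => x i)) :=
    Measure.isProbabilityMeasure_map hm.aemeasurable
  refine Measure.ext_of_Iic _ _ (fun t => ?_)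
  rw [Measure.map_apply hm measurableSet_Iic]
  have hpre : (fun x : Fin l → ℝ => x i) ⁻¹' (Iic t) =
      Set.pi univ (Function.update (fun _ => univ) i (Iic t)) :=
    Set.eval_preimage
  rw [hpre, Measure.pi_pi]
  rw [Finset.prod_eq_single i]
  · simp
  · intro j _ hji
    simp [Function.update_apply, hji]
  · intro h
    exact absurd (Finset.mem_univ i) h


end S15

open S15

/-- **Weak stability of couplings (Lemma 21).** If the marginals `P^{(n)}_{X_i}` converge weakly
to `P_{X_i}` and `P_X` is a coupling of the limits, then along a subsequence there are couplings
of the `P^{(n)}_{X_i}` converging weakly to `P_X`. -/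
theorem statement15 {l : ℕ} (hl : 2 ≤ l)
    (P : Fin l → Measure ℝ) (Pn : ℕ → Fin l → Measure ℝ)
    (hP : ∀ i, IsProbabilityMeasure (P i)) (hPn : ∀ n i, IsProbabilityMeasure (Pn n i))
    (hweak : ∀ i, ∀ f : BoundedContinuousFunction ℝ ℝ,
      Filter.Tendsto (fun n => ∫ x, f x ∂(Pn n i)) Filter.atTop (nhds (∫ x, f x ∂(P i))))
    (PX : Measure (Fin l → ℝ)) (hPX : IsProbabilityMeasure PX)
    (hmarg : ∀ i, PX.map (fun x => x i) = P i) :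
    ∃ nk : ℕ → ℕ, StrictMono nk ∧ ∃ Pk : ℕ → Measure (Fin l → ℝ),
      (∀ k, IsProbabilityMeasure (Pk k)) ∧
      (∀ k i, (Pk k).map (fun x => x i) = Pn (nk k) i) ∧
      ∀ f : BoundedContinuousFunction (Fin l → ℝ) ℝ,
        Filter.Tendsto (fun k => ∫ x, f x ∂(Pk k)) Filter.atTop (nhds (∫ x, f x ∂PX)) := by
  classical
  haveI : ∀ i, IsProbabilityMeasure (P i) := hP
  haveI : ∀ n i, IsProbabilityMeasure (Pn n i) := hPn
  set νl : Measure (Fin l → ℝ) := Measure.pi (fun _ : Fin l => unif) with hνl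
  haveI : IsProbabilityMeasure νl := by rw [hνl]; infer_instance
  set Ω : Measure ((Fin l → ℝ) × (Fin l → ℝ)) := PX.prod νl with hΩ
  haveI : IsProbabilityMeasure Ω := by rw [hΩ]; infer_instance
  set pairm : Fin l → ((Fin l → ℝ) × (Fin l → ℝ)) → ℝ × ℝ :=
    fun i ω => (ω.1 i, ω.2 i) with hpairmdef
  set U : Fin l → ((Fin l → ℝ) × (Fin l → ℝ)) → ℝ :=
    fun i ω => dtf (P i) (pairm i ω) with hUdef
  set T : ℕ → ((Fin l → ℝ) × (Fin l → ℝ)) → (Fin l → ℝ) :=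
    fun n ω i => quantile (Pn n i) (U i ω) with hTdef
  have hpairm : ∀ i, Measurable (pairm i) := fun i =>
    ((measurable_pi_apply i).comp measurable_fst).prodMk
      ((measurable_pi_apply i).comp measurable_snd)
  have hU : ∀ i, Measurable (U i) := fun i => measurable_dtf.comp (hpairm i)
  have hT : ∀ n, Measurable (T n) := fun n =>
    measurable_pi_lambda _ (fun i => (measurable_quantile (Pn n i)).comp (hU i))
  have hlawpair : ∀ i, Ω.map (pairm i) = (P i).prod unif := by
    intro i
    have heq : pairm i = Prod.map (fun x : Fin l → ℝ => x i) (fun x : Fin l → ℝ => x i) := rfl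
    rw [heq, hΩ, ← Measure.map_prod_map _ _ (measurable_pi_apply i) (measurable_pi_apply i),
      hmarg i, hνl, S15.map_eval_pi]
  have hlawU : ∀ i, Ω.map (U i) = unif := by
    intro i
    have heq : U i = (dtf (P i)) ∘ (pairm i) := rfl
    rw [heq, ← Measure.map_map measurable_dtf (hpairm i), hlawpair i, map_dtf]
  -- bad sets for quantile convergence
  have hcb : ∀ i, ∃ bad : Set ℝ, bad.Countable ∧
      ∀ u ∈ Ioo (0:ℝ) 1, u ∉ bad → GoodAt (P i) u :=
    fun i => exists_countable_bad (P i)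
  choose bad hbadc hbadg using hcb
  -- the a.e. good event
  have hae : ∀ᵐ ω ∂Ω, ∀ i, (U i ω ∈ Ioo (0:ℝ) 1 ∧ U i ω ∉ bad i) ∧
      quantile (P i) (U i ω) = ω.1 i := by
    rw [ae_all_iff]
    intro i
    have hE1 : Ω ((U i) ⁻¹' ((Ioo (0:ℝ) 1)ᶜ ∪ bad i)) = 0 := by
      rw [← Measure.map_apply (hU i) (measurableSet_Ioo.compl.union (hbadc i).measurableSet),
        hlawU i]
      have hb0 : unif (bad i) = 0 := by
        have h1 : unif (bad i) ≤ volume (bad i) :=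
          Measure.le_iff'.mp Measure.restrict_le_self (bad i)
        have h2 : volume (bad i) = 0 := (hbadc i).measure_zero _
        rw [h2] at h1
        exact le_antisymm h1 (zero_le')
      exact measure_union_null unif_compl_Ioo hb0
    have hE2 : Ω ((pairm i) ⁻¹' {p : ℝ × ℝ | ¬ quantile (P i) (dtf (P i) p) = p.1}) = 0 := by
      have hms : MeasurableSet {p : ℝ × ℝ | ¬ quantile (P i) (dtf (P i) p) = p.1} := by
        apply MeasurableSet.compl (s := {p : ℝ × ℝ | quantile (P i) (dtf (P i) p) = p.1})
        exact measurableSet_eq_fun ((measurable_quantile (P i)).comp measurable_dtf)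
          measurable_fst
      rw [← Measure.map_apply (hpairm i) hms, hlawpair i]
      exact ae_iff.mp (ae_quantile_dtf (μ := P i))
    rw [ae_iff]
    apply measure_mono_null _ (measure_union_null hE1 hE2)
    intro ω hω
    simp only [mem_setOf_eq] at hω
    by_contra hmem
    simp only [mem_union, mem_preimage, mem_compl_iff, mem_setOf_eq, not_or, not_not] at hmem
    exact hω ⟨⟨hmem.1.1, hmem.1.2⟩, hmem.2⟩
  -- pointwise convergence
  have hTend : ∀ᵐ ω ∂Ω, Tendsto (fun n => T n ω) atTop (𝓝 ω.1) := by
    filter_upwards [hae] with ω hω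
    rw [tendsto_pi_nhds]
    intro i
    have h := tendsto_quantile (P := P i) (Pn := fun n => Pn n i) (hweak i)
      (hω i).1.1 (hbadg i _ (hω i).1.1 (hω i).1.2)
    rw [(hω i).2] at h
    exact h
  refine ⟨id, strictMono_id, fun n => Ω.map (T n), ?_, ?_, ?_⟩
  · exact fun k => Measure.isProbabilityMeasure_map (hT k).aemeasurable
  · intro k i
    rw [Measure.map_map (measurable_pi_apply i) (hT k)]
    have heq : (fun x : Fin l → ℝ => x i) ∘ (T k) = (quantile (Pn k i)) ∘ (U i) := rfl
    rw [heq, ← Measure.map_map (measurable_quantile (Pn k i)) (hU i), hlawU i,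
      map_quantile_unif]
    rfl
  · intro f
    have hint : ∀ n, ∫ x, f x ∂(Ω.map (T n)) = ∫ ω, f (T n ω) ∂Ω := fun n =>
      integral_map (hT n).aemeasurable f.continuous.measurable.aestronglyMeasurable
    have hfst : Ω.map Prod.fst = PX := by
      rw [hΩ, Measure.map_fst_prod, measure_univ, one_smul]
    have hlim : ∫ x, f x ∂PX = ∫ ω, f ω.1 ∂Ω := by
      rw [← hfst, integral_map measurable_fst.aemeasurable
        f.continuous.measurable.aestronglyMeasurable]
    simp only [id_eq, hint, hlim]
    apply tendsto_integral_of_dominated_convergence (fun _ => ‖f‖)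
    · exact fun n => (f.continuous.measurable.comp (hT n)).aestronglyMeasurable
    · exact integrable_const _
    · exact fun n => Filter.Eventually.of_forall (fun ω => f.norm_coe_le_norm (T n ω))
    · filter_upwards [hTend] with ω hω
      exact (f.continuous.tendsto ω.1).comp hω

end
end

section
/- Let A be a real topological vector space with topological dual A*, let k ≥ 1, and let Θ_j : A → ℝ ∪ {+∞} be convex functions for j = 0,1,…,k. Suppose there exist u_1,…,u_k ∈ A such that, setting u_0 := −(u_1 + ⋯ + u_k), one has Θ_j(u_j) < ∞ for all j = 0,…,k, and Θ_0 is upper semicontinuous at u_0. Then −inf_{ℓ ∈ A*} Σ_{j=0}^k Θ_j*(ℓ) = inf_{u_1,…,u_k ∈ A} [ Θ_0( −Σ_{j=1}^k u_j ) + Σ_{j=1}^k Θ_j(u_j) ]. -/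
open Finset

private lemma ereal_coe_sum {ι : Type*} (s : Finset ι) (g : ι → ℝ) :
    ((∑ j ∈ s, g j : ℝ) : EReal) = ∑ j ∈ s, (g j : EReal) :=
  map_sum (⟨⟨Real.toEReal, EReal.coe_zero⟩, EReal.coe_add⟩ : ℝ →+ EReal) g s

private lemma ereal_sum_ne_bot {ι : Type*} (s : Finset ι) (f : ι → EReal)
    (h : ∀ j ∈ s, f j ≠ ⊥) : ∑ j ∈ s, f j ≠ ⊥ := by
  classical
  induction s using Finset.induction with
  | empty => simp
  | insert a t hns ih =>
    rw [Finset.sum_insert hns]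
    rw [Ne, EReal.add_eq_bot_iff]
    push_neg
    exact ⟨h a (mem_insert_self a t), ih fun j hj => h j (mem_insert_of_mem hj)⟩

private lemma ereal_sum_ne_top {ι : Type*} (s : Finset ι) (f : ι → EReal)
    (h : ∀ j ∈ s, f j ≠ ⊤) : ∑ j ∈ s, f j ≠ ⊤ := by
  classical
  induction s using Finset.induction with
  | empty => simp
  | insert a t hns ih =>
    rw [Finset.sum_insert hns]
    exact (EReal.add_lt_top (h a (mem_insert_self a t))
      (ih fun j hj => h j (mem_insert_of_mem hj))).ne

private lemma ereal_sum_eq_top {ι : Type*} (s : Finset ι) (f : ι → EReal)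
    (hb : ∀ j ∈ s, f j ≠ ⊥) {i : ι} (hi : i ∈ s) (ht : f i = ⊤) : ∑ j ∈ s, f j = ⊤ := by
  classical
  rw [← Finset.add_sum_erase s f hi, ht, EReal.top_add_of_ne_bot]
  exact ereal_sum_ne_bot _ _ fun j hj => hb j (mem_of_mem_erase hj)

/-- If `x + ∑ f < t` with no `⊥` values, then everything is real. -/
private lemma ereal_decomp {n : ℕ} (x : EReal) (f : Fin n → EReal) (t : ℝ)
    (hx : x ≠ ⊥) (hf : ∀ j, f j ≠ ⊥) (h : x + ∑ j, f j < (t : EReal)) :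
    ∃ (p : ℝ) (q : Fin n → ℝ), x = (p : EReal) ∧ (∀ j, f j = (q j : EReal)) ∧
      p + ∑ j, q j < t := by
  have hxt : x ≠ ⊤ := by
    rintro rfl
    rw [EReal.top_add_of_ne_bot (ereal_sum_ne_bot _ _ fun j _ => hf j)] at h
    exact absurd h (not_lt.mpr le_top)
  have hft : ∀ j, f j ≠ ⊤ := by
    intro j hj
    rw [ereal_sum_eq_top Finset.univ f (fun i _ => hf i) (Finset.mem_univ j) hj,
      EReal.add_top_of_ne_bot hx] at h
    exact absurd h (not_lt.mpr le_top)
  refine ⟨x.toReal, fun j => (f j).toReal, (EReal.coe_toReal hxt hx).symm,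
    fun j => (EReal.coe_toReal (hft j) (hf j)).symm, ?_⟩
  rw [← EReal.coe_lt_coe_iff]
  rw [EReal.coe_add, ereal_coe_sum]
  calc ((x.toReal : EReal) + ∑ j, ((f j).toReal : EReal)) = x + ∑ j, f j := by
        rw [EReal.coe_toReal hxt hx]
        congr 1
        exact Finset.sum_congr rfl fun j _ => EReal.coe_toReal (hft j) (hf j)
    _ < (t : EReal) := h

private lemma ereal_sum_le_of_forall {n : ℕ} (a : Fin n → EReal) (c : ℝ)
    (hbot : ∀ j, ⊥ < a j)
    (h : ∀ r : Fin n → ℝ, (∀ j, (r j : EReal) < a j) → ∑ j, r j ≤ c) :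
    ∑ j, a j ≤ (c : EReal) := by
  rcases Nat.eq_zero_or_pos n with hn | hn
  · subst hn
    have h0 := h (fun _ => 0) (fun j => j.elim0)
    simpa using EReal.coe_le_coe_iff.mpr (by simpa using h0)
  have hex : ∀ i, ∃ ri : ℝ, (ri : EReal) < a i := fun i => by
    rcases EReal.exists_between_coe_real (hbot i) with ⟨y, _, hy⟩; exact ⟨y, hy⟩
  choose r hr using hex
  -- no value is ⊤
  have hne : ∀ j, a j ≠ ⊤ := by
    intro j hj
    set r' : Fin n → ℝ := Function.update r j (c + 1 - ∑ i ∈ Finset.univ.erase j, r i) with hr'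
    have hlt : ∀ i, (r' i : EReal) < a i := by
      intro i
      by_cases hij : i = j
      · subst hij; rw [hr', Function.update_self, hj]; exact EReal.coe_lt_top _
      · rw [hr', Function.update_of_ne hij]; exact hr i
    have hsum : ∑ i, r' i = c + 1 := by
      rw [← Finset.add_sum_erase _ _ (Finset.mem_univ j), hr', Function.update_self]
      rw [Finset.sum_congr rfl fun i hi =>
        Function.update_of_ne (Finset.mem_erase.mp hi).1 _ r]
      ring
    have := h r' hlt
    rw [hsum] at this
    linarith
  -- all real
  have hrepr : ∀ j, a j = ((a j).toReal : EReal) :=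
    fun j => (EReal.coe_toReal (hne j) (hbot j).ne').symm
  have hsum : ∑ j, a j = ((∑ j, (a j).toReal : ℝ) : EReal) := by
    rw [ereal_coe_sum]
    exact Finset.sum_congr rfl fun j _ => hrepr j
  rw [hsum, EReal.coe_le_coe_iff]
  by_contra hcon
  push_neg at hcon
  set δ : ℝ := (∑ j, (a j).toReal - c) / (2 * n) with hδ
  have hδpos : 0 < δ := by
    apply div_pos (by linarith) (by positivity)
  have hlt : ∀ j, (((a j).toReal - δ : ℝ) : EReal) < a j := fun j =>
    lt_of_lt_of_le (EReal.coe_lt_coe_iff.mpr (sub_lt_self _ hδpos))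
      (EReal.coe_toReal_le (hbot j).ne')
  have := h (fun j => (a j).toReal - δ) hlt
  rw [Finset.sum_sub_distrib, Finset.sum_const, Finset.card_univ, Fintype.card_fin] at this
  have hne0 : (n : ℝ) ≠ 0 := Nat.cast_ne_zero.mpr hn.ne'
  have hnδ : (n : ℝ) * δ = (∑ j, (a j).toReal - c) / 2 := by
    rw [hδ]; field_simp
  rw [nsmul_eq_mul, hnδ] at this
  linarith



noncomputable section

/-- **A generalization of the Legendre–Fenchel / Fenchel–Rockafellar duality to more than two
functions** (Theorem 25 in the paper). The Legendre–Fenchel transform of `Θ` at a continuous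
linear functional `ℓ` is `⨆ u, (ℓ u - Θ u)`. -/
theorem statement19
    {A : Type*} [AddCommGroup A] [Module ℝ A] [TopologicalSpace A]
    [IsTopologicalAddGroup A] [ContinuousSMul ℝ A]
    {k : ℕ} (hk : 1 ≤ k)
    (Θ : Fin (k + 1) → A → EReal)
    (hΘbot : ∀ j u, Θ j u ≠ ⊥)
    (hΘconvex : ∀ j (u v : A) (a b : ℝ), 0 ≤ a → 0 ≤ b → a + b = 1 →
      Θ j (a • u + b • v) ≤ (a : EReal) * Θ j u + (b : EReal) * Θ j v)
    (u : Fin k → A)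
    (hfin : ∀ j : Fin k, Θ j.succ (u j) < ⊤)
    (hfin0 : Θ 0 (-(∑ j, u j)) < ⊤)
    (husc : UpperSemicontinuousAt (Θ 0) (-(∑ j, u j))) :
    -(⨅ ℓ : A →L[ℝ] ℝ, ∑ j, (⨆ v : A, ((ℓ v : EReal) - Θ j v)))
      = ⨅ w : Fin k → A, (Θ 0 (-(∑ j, w j)) + ∑ j : Fin k, Θ j.succ (w j)) := by
  classical
  -- weak duality
  have key_weak : ∀ (ℓ : A →L[ℝ] ℝ) (w : Fin k → A),
      -(Θ 0 (-(∑ j, w j)) + ∑ j : Fin k, Θ j.succ (w j))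
        ≤ ∑ j, (⨆ v : A, ((ℓ v : EReal) - Θ j v)) := by
    intro ℓ w
    set v : Fin (k+1) → A := Fin.cases (-(∑ j, w j)) w with hv
    have hsum_v : ∑ j, v j = 0 := by
      rw [Fin.sum_univ_succ]
      simp [hv]
    have hobj_v : Θ 0 (-(∑ j, w j)) + ∑ j : Fin k, Θ j.succ (w j) = ∑ j, Θ j (v j) := by
      rw [Fin.sum_univ_succ]
      simp [hv]
    rw [hobj_v]
    refine le_trans ?_ (Finset.sum_le_sum fun j _ =>
      le_iSup (fun x : A => ((ℓ x : EReal) - Θ j x)) (v j))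
    by_cases htop : ∃ j, Θ j (v j) = ⊤
    · obtain ⟨j, hj⟩ := htop
      rw [ereal_sum_eq_top Finset.univ _ (fun i _ => hΘbot i (v i)) (Finset.mem_univ j) hj]
      simp
    · push_neg at htop
      have hrepr : ∀ j, Θ j (v j) = (((Θ j (v j)).toReal : ℝ) : EReal) :=
        fun j => (EReal.coe_toReal (htop j) (hΘbot j (v j))).symm
      have hl : ∑ j, ℓ (v j) = 0 := by
        rw [← map_sum, hsum_v, map_zero]
      calc -(∑ j, Θ j (v j))
          = ((-(∑ j, (Θ j (v j)).toReal) : ℝ) : EReal) := by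
            rw [EReal.coe_neg, ereal_coe_sum]
            congr 1
            exact Finset.sum_congr rfl fun j _ => hrepr j
        _ = ((∑ j, (ℓ (v j) - (Θ j (v j)).toReal) : ℝ) : EReal) := by
            rw [Finset.sum_sub_distrib, hl]
            norm_num
        _ = ∑ j, ((ℓ (v j) : EReal) - Θ j (v j)) := by
            rw [ereal_coe_sum]
            refine Finset.sum_congr rfl fun j _ => ?_
            rw [hrepr j, ← EReal.coe_sub]
            norm_num
        _ ≤ ∑ j, ((ℓ (v j) : EReal) - Θ j (v j)) := le_refl _
  have hweak : -(⨅ ℓ : A →L[ℝ] ℝ, ∑ j, (⨆ v : A, ((ℓ v : EReal) - Θ j v)))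
      ≤ ⨅ w : Fin k → A, (Θ 0 (-(∑ j, w j)) + ∑ j : Fin k, Θ j.succ (w j)) := by
    refine le_iInf fun w => ?_
    rw [EReal.neg_le]
    exact le_iInf fun ℓ => key_weak ℓ w
  refine le_antisymm hweak ?_
  set P : EReal := ⨅ w : Fin k → A, (Θ 0 (-(∑ j, w j)) + ∑ j : Fin k, Θ j.succ (w j)) with hPdef
  have hsEb : (∑ j : Fin k, Θ j.succ (u j)) ≠ ⊥ :=
    ereal_sum_ne_bot _ _ fun j _ => hΘbot _ _
  have hsE : (∑ j : Fin k, Θ j.succ (u j)) ≠ ⊤ :=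
    ereal_sum_ne_top _ _ fun j _ => (hfin j).ne
  have hPlt : P < ⊤ := lt_of_le_of_lt (iInf_le _ u) (EReal.add_lt_top hfin0.ne hsE)
  rcases eq_or_ne P ⊥ with hPbot | hPbot
  · rw [hPbot]; exact bot_le
  set Pr : ℝ := P.toReal with hPr
  have hPP : P = (Pr : EReal) := (EReal.coe_toReal hPlt.ne hPbot).symm
  set x₀ : A := -(∑ j, u j) with hx₀
  set c : ℝ := (Θ 0 x₀).toReal + 1 with hc
  have hΘ0r : Θ 0 x₀ = (((Θ 0 x₀).toReal : ℝ) : EReal) :=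
    (EReal.coe_toReal hfin0.ne (hΘbot 0 x₀)).symm
  have hcgt : Θ 0 x₀ < (c : EReal) := by
    conv_lhs => rw [hΘ0r]
    exact EReal.coe_lt_coe_iff.mpr (by rw [hc]; linarith)
  obtain ⟨O, hOsub, hOopen, hOx⟩ := eventually_nhds_iff.mp (husc (c : EReal) hcgt)
  set sr : ℝ := (∑ j : Fin k, Θ j.succ (u j)).toReal with hsrdef
  have hsr : (∑ j : Fin k, Θ j.succ (u j)) = (sr : EReal) := (EReal.coe_toReal hsE hsEb).symm
  set M : ℝ := c + sr with hM
  set S : Set (A × ℝ) := {p | ∃ w : Fin k → A,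
    Θ 0 (p.1 - ∑ j, w j) + ∑ j : Fin k, Θ j.succ (w j) < (p.2 : EReal)} with hS
  have hSconv : Convex ℝ S := by
    rintro ⟨x₁, t₁⟩ ⟨w₁, hw₁⟩ ⟨x₂, t₂⟩ ⟨w₂, hw₂⟩ a b ha hb hab
    obtain ⟨p₁, q₁, hp₁, hq₁, hlt₁⟩ := ereal_decomp _ _ t₁ (hΘbot _ _) (fun j => hΘbot _ _) hw₁
    obtain ⟨p₂, q₂, hp₂, hq₂, hlt₂⟩ := ereal_decomp _ _ t₂ (hΘbot _ _) (fun j => hΘbot _ _) hw₂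
    refine ⟨fun j => a • w₁ j + b • w₂ j, ?_⟩
    show Θ 0 ((a • x₁ + b • x₂) - ∑ j, (a • w₁ j + b • w₂ j))
        + ∑ j : Fin k, Θ j.succ (a • w₁ j + b • w₂ j) < ((a * t₁ + b * t₂ : ℝ) : EReal)
    have harg : (a • x₁ + b • x₂) - ∑ j, (a • w₁ j + b • w₂ j)
        = a • (x₁ - ∑ j, w₁ j) + b • (x₂ - ∑ j, w₂ j) := by
      rw [Finset.sum_add_distrib, ← Finset.smul_sum, ← Finset.smul_sum, smul_sub, smul_sub]
      abel
    rw [harg]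
    have h0 : Θ 0 (a • (x₁ - ∑ j, w₁ j) + b • (x₂ - ∑ j, w₂ j))
        ≤ ((a * p₁ + b * p₂ : ℝ) : EReal) := by
      refine le_trans (hΘconvex 0 _ _ a b ha hb hab) ?_
      rw [hp₁, hp₂, ← EReal.coe_mul, ← EReal.coe_mul, ← EReal.coe_add]
    have hj : ∀ j : Fin k, Θ j.succ (a • w₁ j + b • w₂ j)
        ≤ ((a * q₁ j + b * q₂ j : ℝ) : EReal) := by
      intro j
      refine le_trans (hΘconvex j.succ _ _ a b ha hb hab) ?_
      rw [hq₁ j, hq₂ j, ← EReal.coe_mul, ← EReal.coe_mul, ← EReal.coe_add]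
    calc Θ 0 (a • (x₁ - ∑ j, w₁ j) + b • (x₂ - ∑ j, w₂ j))
          + ∑ j : Fin k, Θ j.succ (a • w₁ j + b • w₂ j)
        ≤ ((a * p₁ + b * p₂ : ℝ) : EReal) + ∑ j : Fin k, ((a * q₁ j + b * q₂ j : ℝ) : EReal) :=
          add_le_add h0 (Finset.sum_le_sum fun j _ => hj j)
      _ = (((a * p₁ + b * p₂) + ∑ j : Fin k, (a * q₁ j + b * q₂ j) : ℝ) : EReal) := by
          rw [← ereal_coe_sum]
          exact (EReal.coe_add _ _).symm
      _ < ((a * t₁ + b * t₂ : ℝ) : EReal) := by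
          rw [EReal.coe_lt_coe_iff]
          have hsplit : (a * p₁ + b * p₂) + ∑ j : Fin k, (a * q₁ j + b * q₂ j)
              = a * (p₁ + ∑ j, q₁ j) + b * (p₂ + ∑ j, q₂ j) := by
            rw [Finset.sum_add_distrib, ← Finset.mul_sum, ← Finset.mul_sum]; ring
          rw [hsplit]
          have hab' : 0 < a ∨ 0 < b := by
            by_contra hcon
            push_neg at hcon
            have ha0 : a = 0 := le_antisymm hcon.1 ha
            have hb0 : b = 0 := le_antisymm hcon.2 hb
            rw [ha0, hb0] at hab
            norm_num at hab
          rcases hab' with hpos | hpos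
          · have h1 : a * (p₁ + ∑ j, q₁ j) < a * t₁ := mul_lt_mul_of_pos_left hlt₁ hpos
            have h2 : b * (p₂ + ∑ j, q₂ j) ≤ b * t₂ := mul_le_mul_of_nonneg_left hlt₂.le hb
            linarith
          · have h1 : a * (p₁ + ∑ j, q₁ j) ≤ a * t₁ := mul_le_mul_of_nonneg_left hlt₁.le ha
            have h2 : b * (p₂ + ∑ j, q₂ j) < b * t₂ := mul_lt_mul_of_pos_left hlt₂ hpos
            linarith
  set Uset : Set A := (fun x : A => x - ∑ j, u j) ⁻¹' O with hUset
  have hUopen : IsOpen Uset := hOopen.preimage (continuous_id.sub continuous_const)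
  have hU0 : (0 : A) ∈ Uset := by
    show (0 : A) - ∑ j, u j ∈ O
    rw [zero_sub]
    exact hOx
  have hprod : Uset ×ˢ Set.Ioi M ⊆ S := by
    rintro ⟨x, t⟩ ⟨hxU, ht⟩
    refine ⟨u, ?_⟩
    show Θ 0 (x - ∑ j, u j) + ∑ j : Fin k, Θ j.succ (u j) < (t : EReal)
    rw [hsr]
    calc Θ 0 (x - ∑ j, u j) + (sr : EReal) < (c : EReal) + (sr : EReal) :=
          EReal.add_lt_add_right_coe (hOsub _ hxU) sr
      _ = ((M : ℝ) : EReal) := by rw [← EReal.coe_add]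
      _ < (t : EReal) := EReal.coe_lt_coe_iff.mpr ht
  have hprodInt : Uset ×ˢ Set.Ioi M ⊆ interior S :=
    interior_maximal hprod (hUopen.prod isOpen_Ioi)
  have hz : ∀ t : ℝ, M < t → ((0 : A), t) ∈ interior S := fun t ht => hprodInt ⟨hU0, ht⟩
  have hp₀ : ((0 : A), Pr) ∉ interior S := by
    intro hmem
    obtain ⟨w, hw⟩ := interior_subset hmem
    have hle : P ≤ Θ 0 (-(∑ j, w j)) + ∑ j : Fin k, Θ j.succ (w j) := iInf_le _ w
    rw [hPP] at hle
    have hw' : Θ 0 (-(∑ j, w j)) + ∑ j : Fin k, Θ j.succ (w j) < (Pr : EReal) := by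
      have := hw
      rwa [show ((0 : A), Pr).1 - ∑ j, w j = -(∑ j, w j) by simp] at this
    exact absurd (lt_of_le_of_lt hle hw') (lt_irrefl _)
  obtain ⟨f, hf⟩ := geometric_hahn_banach_open_point hSconv.interior isOpen_interior hp₀
  set z₀ : A × ℝ := ((0 : A), M + 1) with hz₀def
  have hz₀int : z₀ ∈ interior S := hz (M + 1) (lt_add_one M)
  have hfS : ∀ p ∈ S, f p ≤ f ((0 : A), Pr) := by
    intro p hp
    have hseq : ∀ n : ℕ, (1/((n:ℝ)+1)) * f z₀ + (1 - 1/((n:ℝ)+1)) * f p < f ((0 : A), Pr) := by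
      intro n
      have hpos : (0:ℝ) < 1/((n:ℝ)+1) := by positivity
      have hle : (0:ℝ) ≤ 1 - 1/((n:ℝ)+1) := by
        have h1 : (1:ℝ)/((n:ℝ)+1) ≤ 1 := by
          rw [div_le_one (by positivity)]
          linarith [Nat.cast_nonneg (α := ℝ) n]
        linarith
      have hmem := hSconv.combo_interior_self_mem_interior hz₀int hp hpos hle (by ring)
      have hlt := hf _ hmem
      rwa [map_add, map_smul, map_smul, smul_eq_mul, smul_eq_mul] at hlt
    have htend : Filter.Tendsto
        (fun n : ℕ => (1/((n:ℝ)+1)) * f z₀ + (1 - 1/((n:ℝ)+1)) * f p)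
        Filter.atTop (nhds (f p)) := by
      have h0 : Filter.Tendsto (fun n : ℕ => 1/((n:ℝ)+1)) Filter.atTop (nhds 0) :=
        tendsto_one_div_add_atTop_nhds_zero_nat
      have hcomb := (h0.mul_const (f z₀)).add
        (((tendsto_const_nhds (x := (1:ℝ))).sub h0).mul_const (f p))
      simpa using hcomb
    exact le_of_tendsto htend (Filter.Eventually.of_forall fun n => (hseq n).le)
  set μ : ℝ := f ((0 : A), (1 : ℝ)) with hμdef
  have h00 : f ((0 : A), (0 : ℝ)) = 0 := by
    have h0' : ((0 : A), (0 : ℝ)) = (0 : A × ℝ) := rfl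
    rw [h0', map_zero]
  have hlin : ∀ (x : A) (t : ℝ), f (x, t) = f (x, 0) + t * μ := by
    intro x t
    have hdec : ((x, t) : A × ℝ) = (x, (0:ℝ)) + t • ((0:A), (1:ℝ)) := by
      ext
      · show x = x + t • (0 : A)
        rw [smul_zero, add_zero]
      · show t = 0 + t * 1
        ring
    rw [hdec, map_add, map_smul, smul_eq_mul]
  have hfp₀ : f ((0 : A), Pr) = Pr * μ := by
    rw [hlin 0 Pr, h00, zero_add]
  have hIlt : ∀ t : ℝ, M < t → t * μ < Pr * μ := by
    intro t ht
    have hlt := hf _ (hz t ht)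
    rwa [hlin 0 t, h00, zero_add, hfp₀] at hlt
  have hμ : μ < 0 := by
    rcases lt_trichotomy μ 0 with h | h | h
    · exact h
    · exfalso
      have := hIlt (M + 1) (lt_add_one M)
      rw [h] at this
      simp at this
    · exfalso
      have h1 := hIlt (max (M+1) (Pr+1)) (lt_of_lt_of_le (lt_add_one M) (le_max_left _ _))
      have h2 : Pr + 1 ≤ max (M+1) (Pr+1) := le_max_right _ _
      nlinarith
  have hμpos : 0 < -μ := neg_pos.mpr hμ
  have hbound : ∀ (x : A) (t : ℝ), (x, t) ∈ S → f (x, (0:ℝ)) + t * μ ≤ Pr * μ := by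
    intro x t hxt
    have hle := hfS _ hxt
    rwa [hlin x t, hfp₀] at hle
  set ℓ : A →L[ℝ] ℝ := (-μ)⁻¹ • (f.comp (ContinuousLinearMap.inl ℝ A ℝ)) with hℓdef
  have hℓapp : ∀ x : A, ℓ x = (-μ)⁻¹ * f (x, (0:ℝ)) := by
    intro x
    rw [hℓdef]
    rfl
  have hkey : ∀ (x : A) (t : ℝ), (x, t) ∈ S → ℓ x - t ≤ -Pr := by
    intro x t hxt
    have hb := hbound x t hxt
    have h2 : f (x, (0:ℝ)) ≤ (t - Pr) * (-μ) := by
      have hr : (t - Pr) * (-μ) = Pr * μ - t * μ := by ring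
      rw [hr]
      linarith
    have h3 : (-μ)⁻¹ * f (x, (0:ℝ)) ≤ t - Pr := by
      calc (-μ)⁻¹ * f (x, (0:ℝ)) ≤ (-μ)⁻¹ * ((t - Pr) * (-μ)) :=
            mul_le_mul_of_nonneg_left h2 (inv_nonneg.mpr hμpos.le)
        _ = t - Pr := by field_simp [hμ.ne]
    rw [hℓapp x]
    linarith
  -- the dual bound
  rw [hPP]
  have hDle : (⨅ ℓ' : A →L[ℝ] ℝ, ∑ j, (⨆ v : A, ((ℓ' v : EReal) - Θ j v)))
      ≤ ((-Pr : ℝ) : EReal) := by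
    refine le_trans (iInf_le _ ℓ) ?_
    refine ereal_sum_le_of_forall _ _ ?_ ?_
    · intro j
      set vw : Fin (k+1) → A := Fin.cases x₀ u with hvw
      have hvwt : Θ j (vw j) ≠ ⊤ := by
        induction j using Fin.cases with
        | zero => simpa [hvw] using hfin0.ne
        | succ i => simpa [hvw] using (hfin i).ne
      have heq : ((ℓ (vw j) : EReal) - Θ j (vw j))
          = ((ℓ (vw j) - (Θ j (vw j)).toReal : ℝ) : EReal) := by
        rw [EReal.coe_sub]
        congr 1
        exact (EReal.coe_toReal hvwt (hΘbot _ _)).symm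
      refine lt_of_lt_of_le ?_ (le_iSup (fun v : A => ((ℓ v : EReal) - Θ j v)) (vw j))
      rw [heq]
      exact EReal.bot_lt_coe _
    · intro r hr
      have hch : ∀ j, ∃ v : A, (r j : EReal) < (ℓ v : EReal) - Θ j v :=
        fun j => lt_iSup_iff.mp (hr j)
      choose v hv using hch
      have hvt : ∀ j, Θ j (v j) ≠ ⊤ := by
        intro j hj
        have h := hv j
        rw [hj, EReal.sub_top] at h
        exact not_lt_bot h
      set θr : Fin (k+1) → ℝ := fun j => (Θ j (v j)).toReal with hθrdef
      have hΘv : ∀ j, Θ j (v j) = ((θr j : ℝ) : EReal) :=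
        fun j => (EReal.coe_toReal (hvt j) (hΘbot _ _)).symm
      have hrlt : ∀ j, r j < ℓ (v j) - θr j := by
        intro j
        have h := hv j
        rw [hΘv j, ← EReal.coe_sub, EReal.coe_lt_coe_iff] at h
        exact h
      set x : A := ∑ j, v j with hxdef
      set T : ℝ := ∑ j, θr j with hTdef
      have hmem : ∀ t : ℝ, T < t → ((x, t) : A × ℝ) ∈ S := by
        intro t ht
        refine ⟨fun i => v i.succ, ?_⟩
        show Θ 0 (x - ∑ i : Fin k, v i.succ) + ∑ i : Fin k, Θ i.succ (v i.succ) < (t : EReal)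
        have hxdec : x - ∑ i : Fin k, v i.succ = v 0 := by
          rw [hxdef, Fin.sum_univ_succ]
          abel
        rw [hxdec]
        have hval : Θ 0 (v 0) + ∑ i : Fin k, Θ i.succ (v i.succ) = ((T : ℝ) : EReal) := by
          rw [hΘv 0, Finset.sum_congr rfl (fun i _ => hΘv i.succ), ← ereal_coe_sum,
            ← EReal.coe_add]
          rw [hTdef, Fin.sum_univ_succ]
        rw [hval]
        exact EReal.coe_lt_coe_iff.mpr ht
      have hlxT : ℓ x - T ≤ -Pr := by
        by_contra hcon
        push_neg at hcon
        set ε : ℝ := (ℓ x - T + Pr)/2 with hεdef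
        have hεpos : 0 < ε := by rw [hεdef]; linarith
        have := hkey x (T + ε) (hmem _ (by linarith))
        rw [hεdef] at this
        linarith
      have hsum : ∑ j, ℓ (v j) = ℓ x := by rw [hxdef, map_sum]
      have hslt : ∑ j, r j < ∑ j, (ℓ (v j) - θr j) :=
        Finset.sum_lt_sum_of_nonempty Finset.univ_nonempty (fun j _ => hrlt j)
      rw [Finset.sum_sub_distrib, hsum, ← hTdef] at hslt
      linarith
  refine EReal.le_neg_of_le_neg ?_
  rw [← EReal.coe_neg]
  exact hDle

end
end
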